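/- With the twisted GKLO operators κ'_{i,k} as in the context: for all pairs (i,k) ≠ (j,l) (with i, j ∈ I, 1 ≤ k ≤ m_i, 1 ≤ l ≤ m_j), the following identity of ℂ-linear endomorphisms of F holds: κ'_{i,k} ∘ κ'_{j,l} ∘ M(γ_{i,k} − γ_{j,l} + ½ a_{ij} ℏ) = κ'_{j,l} ∘ κ'_{i,k} ∘ M(γ_{i,k} − γ_{j,l} − ½ a_{ij} ℏ). -/
import Mathlib


/- Twisted GKLO representation setup (type AI).
   Indices: `i ∈ I = {1,…,n−1}`, `1 ≤ k ≤ m i`, with conventions `m 0 = m n = 0`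
   (and `lam 0 = lam n = 0`), so that the indeterminates are exactly
   `ℏ`, `γ_{i,k}` (`i ∈ I`, `1 ≤ k ≤ m i`), `r_{i,t}` (`i ∈ I`, `1 ≤ t ≤ lam i`). -/

noncomputable section

/-- The indexing type of the indeterminates: `ℏ`, the `γ_{i,k}` and the `r_{i,t}`. -/
abbrev GVar (n : ℕ) (m lam : ℕ → ℕ) : Type :=
  Unit ⊕ ((Σ i : Fin (n + 1), Fin (m i)) ⊕ (Σ i : Fin (n + 1), Fin (lam i)))

/-- `F`, the fraction field of the polynomial ring over `ℂ` in the indeterminates. -/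
abbrev GF (n : ℕ) (m lam : ℕ → ℕ) : Type :=
  FractionRing (MvPolynomial (GVar n m lam) ℂ)

/-- The indeterminate `ℏ`. -/
def hb (n : ℕ) (m lam : ℕ → ℕ) : GF n m lam :=
  algebraMap (MvPolynomial (GVar n m lam) ℂ) (GF n m lam) (MvPolynomial.X (Sum.inl ()))

/-- The indeterminate `γ_{i,k}` (for `1 ≤ k ≤ m i`, `i ≤ n`; junk value `0` otherwise). -/
def gam (n : ℕ) (m lam : ℕ → ℕ) (i k : ℕ) : GF n m lam :=
  if h : i < n + 1 ∧ k - 1 < m i then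
    algebraMap (MvPolynomial (GVar n m lam) ℂ) (GF n m lam)
      (MvPolynomial.X (Sum.inr (Sum.inl ⟨⟨i, h.1⟩, ⟨k - 1, h.2⟩⟩)))
  else 0

/-- The indeterminate `r_{i,t}` (for `1 ≤ t ≤ lam i`, `i ≤ n`; junk value `0` otherwise). -/
def rv (n : ℕ) (m lam : ℕ → ℕ) (i t : ℕ) : GF n m lam :=
  if h : i < n + 1 ∧ t - 1 < lam i then
    algebraMap (MvPolynomial (GVar n m lam) ℂ) (GF n m lam)
      (MvPolynomial.X (Sum.inr (Sum.inr ⟨⟨i, h.1⟩, ⟨t - 1, h.2⟩⟩)))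
  else 0

/-- `ξ_{i,k} = γ_{i,k} + ℏ`. -/
def xi (n : ℕ) (m lam : ℕ → ℕ) (i k : ℕ) : GF n m lam :=
  gam n m lam i k + hb n m lam

/-- `R_i(x) = ∏_{t=1}^{λ_i} (x² − r_{i,t}²)`. -/
def RR (n : ℕ) (m lam : ℕ → ℕ) (i : ℕ) (x : GF n m lam) : GF n m lam :=
  ∏ t ∈ Finset.Icc 1 (lam i), (x ^ 2 - rv n m lam i t ^ 2)

/-- The coefficient `c_{i,k}` of the twisted GKLO operator `κ_{i,k}`. -/
def cc (n : ℕ) (m lam : ℕ → ℕ) (i k : ℕ) : GF n m lam :=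
  ((∏ l ∈ Finset.Icc 1 (m (i + 1)),
      (gam n m lam i k ^ 2 - (gam n m lam (i + 1) l + hb n m lam / 2) ^ 2)) *
    ∏ l ∈ Finset.Icc 1 (m (i - 1)),
      (gam n m lam i k + gam n m lam (i - 1) l + hb n m lam / 2)) /
  (2 * (gam n m lam i k - hb n m lam / 2) *
    ∏ l ∈ (Finset.Icc 1 (m i)).erase k, (gam n m lam i k ^ 2 - gam n m lam i l ^ 2))

/-- The coefficient `c'_{i,k}` of the twisted GKLO operator `κ'_{i,k}`. -/
def cc' (n : ℕ) (m lam : ℕ → ℕ) (i k : ℕ) : GF n m lam :=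
  (RR n m lam i (xi n m lam i k) *
    ∏ l ∈ Finset.Icc 1 (m (i - 1)),
      (xi n m lam i k - gam n m lam (i - 1) l - hb n m lam / 2)) /
  (2 * (gam n m lam i k + 3 * hb n m lam / 2) *
    ∏ l ∈ (Finset.Icc 1 (m i)).erase k, (xi n m lam i k ^ 2 - xi n m lam i l ^ 2))

/-- `M(f)`, the multiplication operator `x ↦ f·x`, as a `ℂ`-linear endomorphism of `F`. -/
def Mop (n : ℕ) (m lam : ℕ → ℕ) (f : GF n m lam) : Module.End ℂ (GF n m lam) :=
  LinearMap.mulLeft ℂ f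

/-- `κ_{i,k} = M(c_{i,k}) ∘ σ⁻_{i,k}`, where `σ` is the family of automorphisms `σ⁻`. -/
def kap (n : ℕ) (m lam : ℕ → ℕ) (σ : ℕ → ℕ → (GF n m lam ≃ₐ[ℂ] GF n m lam))
    (i k : ℕ) : Module.End ℂ (GF n m lam) :=
  Mop n m lam (cc n m lam i k) * (σ i k).toLinearMap

/-- `κ'_{i,k} = M(c'_{i,k}) ∘ σ⁺_{i,k}`, where `σ` is the family of automorphisms `σ⁺`. -/
def kap' (n : ℕ) (m lam : ℕ → ℕ) (σ : ℕ → ℕ → (GF n m lam ≃ₐ[ℂ] GF n m lam))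
    (i k : ℕ) : Module.End ℂ (GF n m lam) :=
  Mop n m lam (cc' n m lam i k) * (σ i k).toLinearMap

/-- The Cartan matrix of `sl_n`: `a_{ii} = 2`, `a_{ij} = −1` if `|i−j|=1`, else `0`. -/
def cartan (i j : ℕ) : ℤ :=
  if i = j then 2 else if i + 1 = j ∨ j + 1 = i then -1 else 0

namespace GKaux
open MvPolynomial Finset

variable {n : ℕ} {m lam : ℕ → ℕ}

lemma hb_eq : hb n m lam
    = algebraMap (MvPolynomial (GVar n m lam) ℂ) (GF n m lam) (X (Sum.inl ())) := rfl

lemma gam_eq {i k : ℕ} (h : i < n + 1 ∧ k - 1 < m i) :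
    gam n m lam i k = algebraMap (MvPolynomial (GVar n m lam) ℂ) (GF n m lam)
      (X (Sum.inr (Sum.inl ⟨⟨i, h.1⟩, ⟨k - 1, h.2⟩⟩))) := dif_pos h

lemma gam_eq' {i k : ℕ} (h1 : i < n + 1) (h2 : k < m i) :
    algebraMap (MvPolynomial (GVar n m lam) ℂ) (GF n m lam)
      (X (Sum.inr (Sum.inl ⟨⟨i, h1⟩, ⟨k, h2⟩⟩))) = gam n m lam i (k + 1) := by
  have h : i < n + 1 ∧ (k + 1) - 1 < m i := ⟨h1, by simpa using h2⟩
  rw [gam_eq h]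
  simp only [Nat.add_sub_cancel]

lemma rv_eq' {i t : ℕ} (h1 : i < n + 1) (h2 : t < lam i) :
    algebraMap (MvPolynomial (GVar n m lam) ℂ) (GF n m lam)
      (X (Sum.inr (Sum.inr ⟨⟨i, h1⟩, ⟨t, h2⟩⟩))) = rv n m lam i (t + 1) := by
  rw [rv, dif_pos (⟨h1, by simpa using h2⟩ : i < n + 1 ∧ (t + 1) - 1 < lam i)]
  simp only [Nat.add_sub_cancel]

lemma map_ne_zero' {p : MvPolynomial (GVar n m lam) ℂ} (v : GVar n m lam → ℂ)
    (h : MvPolynomial.eval v p ≠ 0) :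
    algebraMap (MvPolynomial (GVar n m lam) ℂ) (GF n m lam) p ≠ 0 := fun hp =>
  h (by rw [IsFractionRing.to_map_eq_zero_iff.mp hp, map_zero])

lemma comm_of_gen (σ τ : GF n m lam ≃ₐ[ℂ] GF n m lam)
    (hX : ∀ v, σ (τ (algebraMap (MvPolynomial (GVar n m lam) ℂ) (GF n m lam) (X v)))
       = τ (σ (algebraMap (MvPolynomial (GVar n m lam) ℂ) (GF n m lam) (X v)))) :
    ∀ x, σ (τ x) = τ (σ x) := by
  have key : (σ.toAlgHom.comp τ.toAlgHom : GF n m lam →+* GF n m lam)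
      = (τ.toAlgHom.comp σ.toAlgHom : GF n m lam →+* GF n m lam) := by
    apply IsLocalization.ringHom_ext (nonZeroDivisors (MvPolynomial (GVar n m lam) ℂ))
    apply MvPolynomial.ringHom_ext
    · intro c
      have e : (algebraMap (MvPolynomial (GVar n m lam) ℂ) (GF n m lam)) (C c)
          = algebraMap ℂ (GF n m lam) c := by
        rw [← MvPolynomial.algebraMap_eq, ← IsScalarTower.algebraMap_apply]
      rw [RingHom.comp_apply, RingHom.comp_apply, e]
      simp [AlgEquiv.commutes]
    · intro v
      simpa using hX v
  intro x
  simpa using RingHom.congr_fun key x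

end GKaux

open GKaux in
set_option maxHeartbeats 3200000 in
set_option synthInstance.maxHeartbeats 400000 in
theorem gklo_kappaP_kappaP_relation (n : ℕ) (hn : 2 ≤ n) (m lam : ℕ → ℕ)
    (hm0 : m 0 = 0) (hmn : m n = 0) (hlam0 : lam 0 = 0) (hlamn : lam n = 0)
    (σm σp : ℕ → ℕ → (GF n m lam ≃ₐ[ℂ] GF n m lam))
    (hσmh : ∀ i k, σm i k (hb n m lam) = hb n m lam)
    (hσph : ∀ i k, σp i k (hb n m lam) = hb n m lam)
    (hσmr : ∀ i k i' t, σm i k (rv n m lam i' t) = rv n m lam i' t)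
    (hσpr : ∀ i k i' t, σp i k (rv n m lam i' t) = rv n m lam i' t)
    (hσmg : ∀ i k i' k', 1 ≤ i' → i' ≤ n - 1 → 1 ≤ k' → k' ≤ m i' →
      σm i k (gam n m lam i' k') =
        if i' = i ∧ k' = k then gam n m lam i k - hb n m lam else gam n m lam i' k')
    (hσpg : ∀ i k i' k', 1 ≤ i' → i' ≤ n - 1 → 1 ≤ k' → k' ≤ m i' →
      σp i k (gam n m lam i' k') =
        if i' = i ∧ k' = k then gam n m lam i k + hb n m lam else gam n m lam i' k')
    (i k j l : ℕ)
    (hi : 1 ≤ i) (hi' : i ≤ n - 1) (hk : 1 ≤ k) (hk' : k ≤ m i)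
    (hj : 1 ≤ j) (hj' : j ≤ n - 1) (hl : 1 ≤ l) (hl' : l ≤ m j)
    (hne : (i, k) ≠ (j, l)) :
    kap' n m lam σp i k * kap' n m lam σp j l *
        Mop n m lam
          (gam n m lam i k - gam n m lam j l + (cartan i j : GF n m lam) * hb n m lam / 2) =
      kap' n m lam σp j l * kap' n m lam σp i k *
        Mop n m lam
          (gam n m lam i k - gam n m lam j l - (cartan i j : GF n m lam) * hb n m lam / 2) := by
  classical
  -- derived index facts
  have hnei : ¬ (i = j ∧ k = l) := by
    rintro ⟨rfl, rfl⟩; exact hne rfl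
  have hnej : ¬ (j = i ∧ l = k) := by
    rintro ⟨rfl, rfl⟩; exact hne rfl
  -- basic action lemmas
  have Hmove : ∀ a b, 1 ≤ a → a ≤ n-1 → 1 ≤ b → b ≤ m a →
      σp a b (gam n m lam a b) = gam n m lam a b + hb n m lam := by
    intro a b h1 h2 h3 h4
    rw [hσpg a b a b h1 h2 h3 h4, if_pos ⟨rfl, rfl⟩]
  have Hfix : ∀ a b i' k', i' ≤ n - 1 → 1 ≤ k' → k' ≤ m i' → ¬(i' = a ∧ k' = b) →
      σp a b (gam n m lam i' k') = gam n m lam i' k' := by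
    intro a b i' k' h1 h2 h3 h4
    have h0 : 1 ≤ i' := by
      rcases Nat.eq_zero_or_pos i' with h | h
      · exfalso; rw [h, hm0] at h3; omega
      · exact h
    rw [hσpg a b i' k' h0 h1 h2 h3, if_neg h4]
  have Happ : ∀ a b, ∀ i' k', i' ≤ n-1 → 1 ≤ k' → k' ≤ m i' →
      σp a b (gam n m lam i' k')
        = gam n m lam i' k' + (if i' = a ∧ k' = b then hb n m lam else 0) := by
    intro a b i' k' h1 h2 h3
    by_cases h : i' = a ∧ k' = b
    · obtain ⟨rfl, rfl⟩ := h
      have h0 : 1 ≤ i' := by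
        rcases Nat.eq_zero_or_pos i' with h | h
        · exfalso; rw [h, hm0] at h3; omega
        · exact h
      rw [if_pos ⟨rfl, rfl⟩, Hmove i' k' h0 h1 h2 h3]
    · rw [if_neg h, Hfix a b i' k' h1 h2 h3 h, add_zero]
  have hswap : ∀ x, σp i k (σp j l x) = σp j l (σp i k x) := by
    apply comm_of_gen
    intro v
    rcases v with _ | (⟨⟨i', hi'lt⟩, ⟨k', hk'lt⟩⟩ | ⟨⟨i', hi'lt⟩, ⟨t', ht'lt⟩⟩)
    · rw [← hb_eq]; simp only [hσph]
    · rw [gam_eq' hi'lt hk'lt]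
      have h2' : k' + 1 ≤ m i' := hk'lt
      have h1 : i' ≤ n - 1 := by
        have hnn : i' ≠ n := by rintro rfl; rw [hmn] at h2'; omega
        omega
      have h2 : 1 ≤ k' + 1 := le_add_self
      rw [Happ j l i' (k'+1) h1 h2 h2', Happ i k i' (k'+1) h1 h2 h2', map_add, map_add,
          Happ i k i' (k'+1) h1 h2 h2', Happ j l i' (k'+1) h1 h2 h2']
      have e1 : σp i k (if i' = j ∧ k' + 1 = l then hb n m lam else 0)
          = (if i' = j ∧ k' + 1 = l then hb n m lam else 0) := by
        split_ifs
        · exact hσph i k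
        · exact map_zero _
      have e2 : σp j l (if i' = i ∧ k' + 1 = k then hb n m lam else 0)
          = (if i' = i ∧ k' + 1 = k then hb n m lam else 0) := by
        split_ifs
        · exact hσph j l
        · exact map_zero _
      rw [e1, e2]; ring
    · rw [rv_eq' hi'lt ht'lt]; simp only [hσpr]
  -- σσ on the Cartan factors
  have eik1 : σp j l (gam n m lam i k) = gam n m lam i k := Hfix j l i k hi' hk hk' hnei
  have eik2 : σp i k (gam n m lam i k) = gam n m lam i k + hb n m lam := Hmove i k hi hi' hk hk'
  have ejl1 : σp i k (gam n m lam j l) = gam n m lam j l := Hfix i k j l hj' hl hl' hnej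
  have ejl2 : σp j l (gam n m lam j l) = gam n m lam j l + hb n m lam := Hmove j l hj hj' hl hl'
  have hfp : σp i k (σp j l (gam n m lam i k - gam n m lam j l
        + (cartan i j : GF n m lam) * hb n m lam / 2))
      = gam n m lam i k - gam n m lam j l + (cartan i j : GF n m lam) * hb n m lam / 2 := by
    simp only [map_sub, map_add, map_div₀, map_mul, map_intCast, map_ofNat,
      hσph, eik1, eik2, ejl1, ejl2]
    ring
  have hfm : σp j l (σp i k (gam n m lam i k - gam n m lam j l
        - (cartan i j : GF n m lam) * hb n m lam / 2))
      = gam n m lam i k - gam n m lam j l - (cartan i j : GF n m lam) * hb n m lam / 2 := by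
    simp only [map_sub, map_add, map_div₀, map_mul, map_intCast, map_ofNat,
      hσph, eik1, eik2, ejl1, ejl2]
    ring
  have hscalar : cc' n m lam i k * σp i k (cc' n m lam j l)
        * (gam n m lam i k - gam n m lam j l + (cartan i j : GF n m lam) * hb n m lam / 2)
      = cc' n m lam j l * σp j l (cc' n m lam i k)
        * (gam n m lam i k - gam n m lam j l - (cartan i j : GF n m lam) * hb n m lam / 2) := by
    -- general helpers
    have HRR : ∀ a b j' (x : GF n m lam),
        σp a b (RR n m lam j' x) = RR n m lam j' (σp a b x) := by
      intro a b j' x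
      simp only [RR, map_prod]
      exact Finset.prod_congr rfl fun t _ => by rw [map_sub, map_pow, map_pow, hσpr]
    have Hccfix : ∀ a b j' l'', j' ≤ n - 1 → 1 ≤ l'' → l'' ≤ m j' → a ≠ j' → a ≠ j' - 1 →
        σp a b (cc' n m lam j' l'') = cc' n m lam j' l'' := by
      intro a b j' l'' h1 h2 h3 hne1 hne2
      have f0 : σp a b (gam n m lam j' l'') = gam n m lam j' l'' :=
        Hfix a b j' l'' h1 h2 h3 (fun h => hne1 h.1.symm)
      have fQ : σp a b (∏ u ∈ Finset.Icc 1 (m (j'-1)),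
          (gam n m lam j' l'' + hb n m lam - gam n m lam (j'-1) u - hb n m lam / 2))
          = ∏ u ∈ Finset.Icc 1 (m (j'-1)),
          (gam n m lam j' l'' + hb n m lam - gam n m lam (j'-1) u - hb n m lam / 2) := by
        rw [map_prod]
        refine Finset.prod_congr rfl fun u hu => ?_
        obtain ⟨hu1, hu2⟩ := Finset.mem_Icc.mp hu
        rw [map_sub, map_sub, map_add, f0, hσph, map_div₀, hσph, map_ofNat,
          Hfix a b (j'-1) u (by omega) hu1 hu2 (fun h => hne2 h.1.symm)]
      have fD : σp a b (∏ u ∈ (Finset.Icc 1 (m j')).erase l'',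
          ((gam n m lam j' l'' + hb n m lam)^2 - (gam n m lam j' u + hb n m lam)^2))
          = ∏ u ∈ (Finset.Icc 1 (m j')).erase l'',
          ((gam n m lam j' l'' + hb n m lam)^2 - (gam n m lam j' u + hb n m lam)^2) := by
        rw [map_prod]
        refine Finset.prod_congr rfl fun u hu => ?_
        obtain ⟨hu1, hu2⟩ := Finset.mem_erase.mp hu
        obtain ⟨h1', h2'⟩ := Finset.mem_Icc.mp hu2
        rw [map_sub, map_pow, map_pow, map_add, map_add, f0, hσph,
          Hfix a b j' u h1 h1' h2' (fun h => hne1 h.1.symm)]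
      simp only [cc', xi, map_div₀, map_mul, map_add, map_ofNat, hσph, HRR, f0, fQ, fD]
    -- nonzero helpers
    have nzA : ∀ i' k', i' < n + 1 → 1 ≤ k' → k' ≤ m i' →
        2 * (gam n m lam i' k' + 3 * hb n m lam / 2) ≠ 0 := by
      intro i' k' h1 h2 h3
      have hk2 : k' - 1 < m i' := by omega
      rw [gam_eq ⟨h1, hk2⟩, hb_eq]
      rw [show (2 : GF n m lam) * (algebraMap (MvPolynomial (GVar n m lam) ℂ) (GF n m lam)
            (MvPolynomial.X (Sum.inr (Sum.inl ⟨⟨i', h1⟩, ⟨k' - 1, hk2⟩⟩)))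
          + 3 * algebraMap (MvPolynomial (GVar n m lam) ℂ) (GF n m lam)
            (MvPolynomial.X (Sum.inl ())) / 2)
        = algebraMap (MvPolynomial (GVar n m lam) ℂ) (GF n m lam)
            (2 * MvPolynomial.X (Sum.inr (Sum.inl ⟨⟨i', h1⟩, ⟨k' - 1, hk2⟩⟩))
              + 3 * MvPolynomial.X (Sum.inl ()))
        from by rw [map_add, map_mul, map_mul, map_ofNat, map_ofNat]; ring]
      apply map_ne_zero' (fun w => if w = Sum.inr (Sum.inl ⟨⟨i', h1⟩, ⟨k' - 1, hk2⟩⟩) then 1 else 0)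
      simp
    have nzB : ∀ i' k' l', i' < n + 1 → 1 ≤ k' → k' ≤ m i' → 1 ≤ l' → l' ≤ m i' → k' ≠ l' →
        (gam n m lam i' k' + hb n m lam)^2 - (gam n m lam i' l' + hb n m lam)^2 ≠ 0 := by
      intro i' k' l' h1 h2 h3 h4 h5 h6
      have hk2 : k' - 1 < m i' := by omega
      have hl2 : l' - 1 < m i' := by omega
      rw [gam_eq ⟨h1, hk2⟩, gam_eq ⟨h1, hl2⟩, hb_eq,
        ← map_add, ← map_add, ← map_pow, ← map_pow, ← map_sub]
      apply map_ne_zero' (fun w => if w = Sum.inr (Sum.inl ⟨⟨i', h1⟩, ⟨k' - 1, hk2⟩⟩) then 1 else 0)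
      have hne2 : (Sum.inr (Sum.inl ⟨⟨i', h1⟩, ⟨l' - 1, hl2⟩⟩) : GVar n m lam)
          ≠ Sum.inr (Sum.inl ⟨⟨i', h1⟩, ⟨k' - 1, hk2⟩⟩) := by
        simp only [ne_eq, Sum.inr.injEq, Sum.inl.injEq, Sigma.mk.inj_iff, heq_eq_eq,
          Fin.mk.injEq, true_and]
        omega
      simp [hne2]
    have nzC : ∀ i' k' l', i' < n + 1 → 1 ≤ k' → k' ≤ m i' → 1 ≤ l' → l' ≤ m i' → k' ≠ l' →
        (gam n m lam i' k' + hb n m lam)^2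
          - (gam n m lam i' l' + hb n m lam + hb n m lam)^2 ≠ 0 := by
      intro i' k' l' h1 h2 h3 h4 h5 h6
      have hk2 : k' - 1 < m i' := by omega
      have hl2 : l' - 1 < m i' := by omega
      rw [gam_eq ⟨h1, hk2⟩, gam_eq ⟨h1, hl2⟩, hb_eq,
        ← map_add, ← map_add, ← map_add, ← map_pow, ← map_pow, ← map_sub]
      apply map_ne_zero' (fun w => if w = Sum.inr (Sum.inl ⟨⟨i', h1⟩, ⟨k' - 1, hk2⟩⟩) then 1 else 0)
      have hne2 : (Sum.inr (Sum.inl ⟨⟨i', h1⟩, ⟨l' - 1, hl2⟩⟩) : GVar n m lam)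
          ≠ Sum.inr (Sum.inl ⟨⟨i', h1⟩, ⟨k' - 1, hk2⟩⟩) := by
        simp only [ne_eq, Sum.inr.injEq, Sum.inl.injEq, Sigma.mk.inj_iff, heq_eq_eq,
          Fin.mk.injEq, true_and]
        omega
      simp [hne2]
    -- case split
    by_cases hij : i = j
    · -- case A : i = j, k ≠ l
      subst hij
      have hkl : k ≠ l := by rintro rfl; exact hne rfl
      have hkS : k ∈ Finset.Icc 1 (m i) := Finset.mem_Icc.mpr ⟨hk, hk'⟩
      have hlS : l ∈ Finset.Icc 1 (m i) := Finset.mem_Icc.mpr ⟨hl, hl'⟩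
      have hlSk : l ∈ (Finset.Icc 1 (m i)).erase k := Finset.mem_erase.mpr ⟨Ne.symm hkl, hlS⟩
      have hkSl : k ∈ (Finset.Icc 1 (m i)).erase l := Finset.mem_erase.mpr ⟨hkl, hkS⟩
      have fixl : σp i k (gam n m lam i l) = gam n m lam i l :=
        Hfix i k i l hi' hl hl' (fun h => hkl h.2.symm)
      have fixk : σp i l (gam n m lam i k) = gam n m lam i k :=
        Hfix i l i k hi' hk hk' (fun h => hkl h.2)
      have cQl : σp i k (∏ u ∈ Finset.Icc 1 (m (i-1)),
          (gam n m lam i l + hb n m lam - gam n m lam (i-1) u - hb n m lam / 2))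
          = ∏ u ∈ Finset.Icc 1 (m (i-1)),
          (gam n m lam i l + hb n m lam - gam n m lam (i-1) u - hb n m lam / 2) := by
        rw [map_prod]
        refine Finset.prod_congr rfl fun u hu => ?_
        obtain ⟨hu1, hu2⟩ := Finset.mem_Icc.mp hu
        rw [map_sub, map_sub, map_add, fixl, hσph, map_div₀, hσph, map_ofNat,
          Hfix i k (i-1) u (by omega) hu1 hu2 (fun h => by omega)]
      have cQk : σp i l (∏ u ∈ Finset.Icc 1 (m (i-1)),
          (gam n m lam i k + hb n m lam - gam n m lam (i-1) u - hb n m lam / 2))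
          = ∏ u ∈ Finset.Icc 1 (m (i-1)),
          (gam n m lam i k + hb n m lam - gam n m lam (i-1) u - hb n m lam / 2) := by
        rw [map_prod]
        refine Finset.prod_congr rfl fun u hu => ?_
        obtain ⟨hu1, hu2⟩ := Finset.mem_Icc.mp hu
        rw [map_sub, map_sub, map_add, fixk, hσph, map_div₀, hσph, map_ofNat,
          Hfix i l (i-1) u (by omega) hu1 hu2 (fun h => by omega)]
      have cDl : σp i k (∏ u ∈ (Finset.Icc 1 (m i)).erase l,
          ((gam n m lam i l + hb n m lam)^2 - (gam n m lam i u + hb n m lam)^2))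
          = ((gam n m lam i l + hb n m lam)^2
              - (gam n m lam i k + hb n m lam + hb n m lam)^2)
            * ∏ u ∈ ((Finset.Icc 1 (m i)).erase l).erase k,
              ((gam n m lam i l + hb n m lam)^2 - (gam n m lam i u + hb n m lam)^2) := by
        rw [map_prod, ← Finset.mul_prod_erase _ _ hkSl]
        congr 1
        · rw [map_sub, map_pow, map_pow, map_add, map_add, fixl, hσph, eik2]
        · refine Finset.prod_congr rfl fun u hu => ?_
          obtain ⟨hu1, hu2⟩ := Finset.mem_erase.mp hu
          obtain ⟨hu3, hu4⟩ := Finset.mem_erase.mp hu2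
          obtain ⟨h1', h2'⟩ := Finset.mem_Icc.mp hu4
          rw [map_sub, map_pow, map_pow, map_add, map_add, fixl, hσph,
            Hfix i k i u hi' h1' h2' (fun h => hu1 h.2)]
      have cDk : σp i l (∏ u ∈ (Finset.Icc 1 (m i)).erase k,
          ((gam n m lam i k + hb n m lam)^2 - (gam n m lam i u + hb n m lam)^2))
          = ((gam n m lam i k + hb n m lam)^2
              - (gam n m lam i l + hb n m lam + hb n m lam)^2)
            * ∏ u ∈ ((Finset.Icc 1 (m i)).erase k).erase l,
              ((gam n m lam i k + hb n m lam)^2 - (gam n m lam i u + hb n m lam)^2) := by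
        rw [map_prod, ← Finset.mul_prod_erase _ _ hlSk]
        congr 1
        · rw [map_sub, map_pow, map_pow, map_add, map_add, fixk, hσph, ejl2]
        · refine Finset.prod_congr rfl fun u hu => ?_
          obtain ⟨hu1, hu2⟩ := Finset.mem_erase.mp hu
          obtain ⟨hu3, hu4⟩ := Finset.mem_erase.mp hu2
          obtain ⟨h1', h2'⟩ := Finset.mem_Icc.mp hu4
          rw [map_sub, map_pow, map_pow, map_add, map_add, fixk, hσph,
            Hfix i l i u hi' h1' h2' (fun h => hu1 h.2)]
      have hc : ((cartan i i : ℤ) : GF n m lam) = 2 := by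
        rw [cartan, if_pos rfl]; norm_num
      rw [hc]
      simp only [cc', xi, map_div₀, map_mul, map_add, map_ofNat, hσph, HRR,
        fixl, fixk, cQl, cQk, cDl, cDk]
      rw [← Finset.mul_prod_erase _ _ hlSk, ← Finset.mul_prod_erase _ _ hkSl]
      have nzDk := nzA i k (by omega) hk hk'
      have nzDl := nzA i l (by omega) hl hl'
      have nz1 := nzB i k l (by omega) hk hk' hl hl' hkl
      have nz2 := nzB i l k (by omega) hl hl' hk hk' (Ne.symm hkl)
      have nz3 := nzC i k l (by omega) hk hk' hl hl' hkl
      have nz4 := nzC i l k (by omega) hl hl' hk hk' (Ne.symm hkl)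
      have nzP : ∏ u ∈ ((Finset.Icc 1 (m i)).erase k).erase l,
          ((gam n m lam i k + hb n m lam)^2 - (gam n m lam i u + hb n m lam)^2) ≠ 0 := by
        rw [Finset.prod_ne_zero_iff]
        intro u hu
        obtain ⟨hu1, hu2⟩ := Finset.mem_erase.mp hu
        obtain ⟨hu3, hu4⟩ := Finset.mem_erase.mp hu2
        obtain ⟨h1', h2'⟩ := Finset.mem_Icc.mp hu4
        exact nzB i k u (by omega) hk hk' h1' h2' (Ne.symm hu3)
      have nzP' : ∏ u ∈ ((Finset.Icc 1 (m i)).erase l).erase k,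
          ((gam n m lam i l + hb n m lam)^2 - (gam n m lam i u + hb n m lam)^2) ≠ 0 := by
        rw [Finset.prod_ne_zero_iff]
        intro u hu
        obtain ⟨hu1, hu2⟩ := Finset.mem_erase.mp hu
        obtain ⟨hu3, hu4⟩ := Finset.mem_erase.mp hu2
        obtain ⟨h1', h2'⟩ := Finset.mem_Icc.mp hu4
        exact nzB i l u (by omega) hl hl' h1' h2' (Ne.symm hu3)
      have hden1 := mul_ne_zero (mul_ne_zero nzDk (mul_ne_zero nz1 nzP))
        (mul_ne_zero nzDl (mul_ne_zero nz4 nzP'))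
      have hden2 := mul_ne_zero (mul_ne_zero nzDl (mul_ne_zero nz2 nzP'))
        (mul_ne_zero nzDk (mul_ne_zero nz3 nzP))
      rw [div_mul_div_comm, div_mul_div_comm, div_mul_eq_mul_div, div_mul_eq_mul_div,
        div_eq_div_iff hden1 hden2]
      ring
    · by_cases hadj1 : i + 1 = j
      · -- case B : j = i + 1
        subst hadj1
        have hkS : k ∈ Finset.Icc 1 (m i) := Finset.mem_Icc.mpr ⟨hk, hk'⟩
        have fixcc : σp (i+1) l (cc' n m lam i k) = cc' n m lam i k :=
          Hccfix (i+1) l i k hi' hk hk' (by omega) (by omega)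
        have f0B : σp i k (gam n m lam (i+1) l) = gam n m lam (i+1) l :=
          Hfix i k (i+1) l hj' hl hl' (fun h => by omega)
        have fQB : σp i k (∏ u ∈ Finset.Icc 1 (m i),
            (gam n m lam (i+1) l + hb n m lam - gam n m lam i u - hb n m lam / 2))
            = (gam n m lam (i+1) l + hb n m lam
                - (gam n m lam i k + hb n m lam) - hb n m lam / 2)
              * ∏ u ∈ (Finset.Icc 1 (m i)).erase k,
                (gam n m lam (i+1) l + hb n m lam - gam n m lam i u - hb n m lam / 2) := by
          rw [map_prod, ← Finset.mul_prod_erase _ _ hkS]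
          congr 1
          · rw [map_sub, map_sub, map_add, f0B, hσph, map_div₀, hσph, map_ofNat, eik2]
          · refine Finset.prod_congr rfl fun u hu => ?_
            obtain ⟨hu1, hu2⟩ := Finset.mem_erase.mp hu
            obtain ⟨h1', h2'⟩ := Finset.mem_Icc.mp hu2
            rw [map_sub, map_sub, map_add, f0B, hσph, map_div₀, hσph, map_ofNat,
              Hfix i k i u hi' h1' h2' (fun h => hu1 h.2)]
        have fDB : σp i k (∏ u ∈ (Finset.Icc 1 (m (i+1))).erase l,
            ((gam n m lam (i+1) l + hb n m lam)^2 - (gam n m lam (i+1) u + hb n m lam)^2))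
            = ∏ u ∈ (Finset.Icc 1 (m (i+1))).erase l,
            ((gam n m lam (i+1) l + hb n m lam)^2 - (gam n m lam (i+1) u + hb n m lam)^2) := by
          rw [map_prod]
          refine Finset.prod_congr rfl fun u hu => ?_
          obtain ⟨hu1, hu2⟩ := Finset.mem_erase.mp hu
          obtain ⟨h1', h2'⟩ := Finset.mem_Icc.mp hu2
          rw [map_sub, map_pow, map_pow, map_add, map_add, f0B, hσph,
            Hfix i k (i+1) u hj' h1' h2' (fun h => by omega)]
        have hc : ((cartan i (i+1) : ℤ) : GF n m lam) = -1 := by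
          rw [cartan, if_neg (by omega), if_pos (Or.inl rfl)]; norm_num
        rw [hc, fixcc]
        simp only [cc', xi, Nat.add_sub_cancel, map_div₀, map_mul, map_add, map_ofNat,
          hσph, HRR, f0B, fQB, fDB]
        rw [← Finset.mul_prod_erase _ _ hkS]
        ring
      · by_cases hadj2 : j + 1 = i
        · -- case C : i = j + 1
          subst hadj2
          have hlS : l ∈ Finset.Icc 1 (m j) := Finset.mem_Icc.mpr ⟨hl, hl'⟩
          have fixcc : σp (j+1) k (cc' n m lam j l) = cc' n m lam j l :=
            Hccfix (j+1) k j l hj' hl hl' (by omega) (by omega)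
          have f0C : σp j l (gam n m lam (j+1) k) = gam n m lam (j+1) k :=
            Hfix j l (j+1) k hi' hk hk' (fun h => by omega)
          have fQC : σp j l (∏ u ∈ Finset.Icc 1 (m j),
              (gam n m lam (j+1) k + hb n m lam - gam n m lam j u - hb n m lam / 2))
              = (gam n m lam (j+1) k + hb n m lam
                  - (gam n m lam j l + hb n m lam) - hb n m lam / 2)
                * ∏ u ∈ (Finset.Icc 1 (m j)).erase l,
                  (gam n m lam (j+1) k + hb n m lam - gam n m lam j u - hb n m lam / 2) := by
            rw [map_prod, ← Finset.mul_prod_erase _ _ hlS]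
            congr 1
            · rw [map_sub, map_sub, map_add, f0C, hσph, map_div₀, hσph, map_ofNat, ejl2]
            · refine Finset.prod_congr rfl fun u hu => ?_
              obtain ⟨hu1, hu2⟩ := Finset.mem_erase.mp hu
              obtain ⟨h1', h2'⟩ := Finset.mem_Icc.mp hu2
              rw [map_sub, map_sub, map_add, f0C, hσph, map_div₀, hσph, map_ofNat,
                Hfix j l j u hj' h1' h2' (fun h => hu1 h.2)]
          have fDC : σp j l (∏ u ∈ (Finset.Icc 1 (m (j+1))).erase k,
              ((gam n m lam (j+1) k + hb n m lam)^2 - (gam n m lam (j+1) u + hb n m lam)^2))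
              = ∏ u ∈ (Finset.Icc 1 (m (j+1))).erase k,
              ((gam n m lam (j+1) k + hb n m lam)^2 - (gam n m lam (j+1) u + hb n m lam)^2) := by
            rw [map_prod]
            refine Finset.prod_congr rfl fun u hu => ?_
            obtain ⟨hu1, hu2⟩ := Finset.mem_erase.mp hu
            obtain ⟨h1', h2'⟩ := Finset.mem_Icc.mp hu2
            rw [map_sub, map_pow, map_pow, map_add, map_add, f0C, hσph,
              Hfix j l (j+1) u hi' h1' h2' (fun h => by omega)]
          have hc : ((cartan (j+1) j : ℤ) : GF n m lam) = -1 := by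
            rw [cartan, if_neg (by omega), if_pos (Or.inr rfl)]; norm_num
          rw [hc, fixcc]
          simp only [cc', xi, Nat.add_sub_cancel, map_div₀, map_mul, map_add, map_ofNat,
            hσph, HRR, f0C, fQC, fDC]
          rw [← Finset.mul_prod_erase _ _ hlS]
          ring
        · -- case D : far apart
          have fix1 : σp i k (cc' n m lam j l) = cc' n m lam j l :=
            Hccfix i k j l hj' hl hl' hij (by omega)
          have fix2 : σp j l (cc' n m lam i k) = cc' n m lam i k :=
            Hccfix j l i k hi' hk hk' (fun h => hij h.symm) (by omega)
          have hc : ((cartan i j : ℤ) : GF n m lam) = 0 := by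
            rw [cartan, if_neg hij, if_neg (by omega)]; norm_num
          rw [hc, fix1, fix2]
          ring

  ext x
  simp only [kap', Mop, Module.End.mul_apply, LinearMap.mulLeft_apply,
    AlgEquiv.toLinearMap_apply, map_mul]
  rw [hfp, hfm, hswap x]
  linear_combination (σp j l (σp i k x)) * hscalar
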